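/- If X is a selectively ω-bounded Tychonoff pseudocompact space, then every compact subset of C_c(X) (the space C(X,ℝ) with the compact-open topology) is metrizable. -/

import Mathlib

open Filter Topology Set

def SelectivelyOmegaBounded (X : Type*) [TopologicalSpace X] : Prop :=
  ∀ U : ℕ → Set X, (∀ n, IsOpen (U n)) → (∀ n, (U n).Nonempty) →
    ∃ x : ℕ → X, (∀ n, x n ∈ U n) ∧
      ∃ φ : ℕ → ℕ, StrictMono φ ∧ IsCompact (closure (Set.range (x ∘ φ)))

def Pseudocompact (X : Type*) [TopologicalSpace X] : Prop :=
  ∀ f : C(X, ℝ), ∃ M : ℝ, ∀ x, |f x| ≤ M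

def EquicontinuousSet {X : Type*} [TopologicalSpace X] (S : Set C(X, ℝ)) : Prop :=
  Equicontinuous (fun f : S => ⇑(f : C(X, ℝ)))

def AscoliSpace (X : Type*) [TopologicalSpace X] : Prop :=
  ∀ S : Set C(X, ℝ), IsCompact S → EquicontinuousSet S

def SeqAscoliSpace (X : Type*) [TopologicalSpace X] : Prop :=
  ∀ (f : ℕ → C(X, ℝ)) (g : C(X, ℝ)), Tendsto f atTop (𝓝 g) →
    EquicontinuousSet (insert g (Set.range f))

/-- Key lemma: in a selectively ω-bounded space, every sequence in a compact subset of
`C_c(X)` has a subsequence converging uniformly (on all of `X`) to a member of the set. -/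
lemma SelectivelyOmegaBounded.exists_unif_subseq {X : Type*} [TopologicalSpace X]
    (hsob : SelectivelyOmegaBounded X)
    (K : Set C(X, ℝ)) (hK : IsCompact K) (F0 : ℕ → C(X, ℝ)) (hF0 : ∀ k, F0 k ∈ K) :
    ∃ σ : ℕ → ℕ, StrictMono σ ∧ ∃ g ∈ K,
      TendstoUniformly (fun k x => F0 (σ k) x) (⇑g) atTop := by
  classical
  rcases isEmpty_or_nonempty X with hX | hX
  · refine ⟨id, strictMono_id, F0 0, hF0 0, ?_⟩
    intro u hu
    filter_upwards with k x
    exact isEmptyElim x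
  -- the pointwise "trace" map
  set Φ0 : X → (ℕ → ℝ) := fun x k => F0 k x with hΦ0def
  haveI : Nonempty ↥(Set.range Φ0) := Nonempty.intro ⟨Φ0 hX.some, mem_range_self _⟩
  obtain ⟨u, hu⟩ := TopologicalSpace.exists_dense_seq ↥(Set.range Φ0)
  choose d hd using fun i => (u i).2
  -- density: every trace is a limit of traces of points of `d`
  have hdense0 : ∀ x : X, ∃ s : ℕ → ℕ,
      Tendsto (fun j => Φ0 (d (s j))) atTop (𝓝 (Φ0 x)) := by
    intro x
    have hx : (⟨Φ0 x, mem_range_self x⟩ : ↥(Set.range Φ0)) ∈ closure (Set.range u) := hu _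
    rcases mem_closure_iff_seq_limit.mp hx with ⟨y, hy, hylim⟩
    choose s hs using hy
    refine ⟨s, ?_⟩
    have h1 : Tendsto (fun j => ((y j : ℕ → ℝ))) atTop (𝓝 (Φ0 x)) :=
      ((continuous_subtype_val.tendsto _).comp hylim : _)
    have h2 : (fun j => Φ0 (d (s j))) = fun j => ((y j : ℕ → ℝ)) := by
      funext j
      rw [hd (s j), hs j]
    rw [h2]
    exact h1
  -- extract a subsequence converging at every point `d i`
  have hq : Continuous (fun f : C(X, ℝ) => (fun i : ℕ => f (d i))) :=
    continuous_pi fun i => continuous_eval_const (d i)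
  obtain ⟨ℓ, hℓmem, σ, hσ, hσlim⟩ :=
    (hK.image hq).isSeqCompact
      (x := fun k => (fun i : ℕ => F0 k (d i))) (fun k => mem_image_of_mem _ (hF0 k))
  set F : ℕ → C(X, ℝ) := fun k => F0 (σ k) with hFdef
  have hFmem : ∀ k, F k ∈ K := fun k => hF0 (σ k)
  have hconv : ∀ i, Tendsto (fun k => F k (d i)) atTop (𝓝 (ℓ i)) := by
    intro i
    exact tendsto_pi_nhds.mp hσlim i
  set Φ : X → (ℕ → ℝ) := fun x k => F k x with hΦdef
  have hdense : ∀ x : X, ∃ s : ℕ → ℕ,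
      Tendsto (fun j => Φ (d (s j))) atTop (𝓝 (Φ x)) := by
    intro x
    obtain ⟨s, hs⟩ := hdense0 x
    refine ⟨s, ?_⟩
    have hre : Continuous (fun v : ℕ → ℝ => (fun k => v (σ k))) :=
      continuous_pi fun k => continuous_apply (σ k)
    exact (hre.tendsto _).comp hs
  -- auxiliary: 1/(n+1) → 0
  have hinv : Tendsto (fun n : ℕ => 1 / ((n : ℝ) + 1)) atTop (𝓝 0) :=
    tendsto_one_div_add_atTop_nhds_zero_nat
  have hinvpos : ∀ n : ℕ, (0:ℝ) < 1 / ((n : ℝ) + 1) := by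
    intro n
    positivity
  -- Lemma F : functions constant on Φ-fibers are "sequentially continuous along traces"
  have lemF : ∀ w : C(X, ℝ), (∀ z z' : X, Φ z = Φ z' → w z = w z') →
      ∀ (x : X) (s : ℕ → ℕ), Tendsto (fun j => Φ (d (s j))) atTop (𝓝 (Φ x)) →
      Tendsto (fun j => w (d (s j))) atTop (𝓝 (w x)) := by
    intro w hw x s hs
    by_contra hcon
    rw [Metric.tendsto_atTop] at hcon
    push_neg at hcon
    obtain ⟨ε, hε, hfar⟩ := hcon
    obtain ⟨jm, hjm, hjfar⟩ :=
      Filter.extraction_of_frequently_atTop (Filter.frequently_atTop.mpr hfar)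
    set d' : ℕ → X := fun m => d (s (jm m)) with hd'def
    have hd'far : ∀ m, ε ≤ dist (w (d' m)) (w x) := fun m => hjfar m
    have hd'lim : Tendsto (fun m => Φ (d' m)) atTop (𝓝 (Φ x)) :=
      hs.comp hjm.tendsto_atTop
    -- the open sets for selective ω-boundedness
    set V : ℕ → Set X := fun m =>
      (⋂ n ∈ Finset.range (m + 1), {z | |F n z - F n (d' m)| < 1 / ((m : ℝ) + 1)}) ∩
        {z | |w z - w (d' m)| < 1 / ((m : ℝ) + 1)} with hVdef
    have hVopen : ∀ m, IsOpen (V m) := by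
      intro m
      refine IsOpen.inter ?_ ?_
      · refine isOpen_biInter_finset fun n _ => ?_
        have hc : Continuous fun z => |F n z - F n (d' m)| :=
          ((F n).continuous.sub continuous_const).abs
        exact isOpen_lt hc continuous_const
      · have hc : Continuous fun z => |w z - w (d' m)| :=
          (w.continuous.sub continuous_const).abs
        exact isOpen_lt hc continuous_const
    have hVne : ∀ m, (V m).Nonempty := by
      intro m
      refine ⟨d' m, ?_, ?_⟩
      · refine mem_iInter₂.mpr fun n _ => ?_
        simp only [mem_setOf_eq, sub_self, abs_zero]
        exact hinvpos m
      · simp only [mem_setOf_eq, sub_self, abs_zero]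
        exact hinvpos m
    obtain ⟨z, hzV, ψ, hψ, hMcpt⟩ := hsob V hVopen hVne
    set M := closure (Set.range (z ∘ ψ)) with hMdef
    set W : Ultrafilter X := Ultrafilter.of (Filter.map (z ∘ ψ) atTop) with hWdef
    have hWle : (W : Filter X) ≤ Filter.map (z ∘ ψ) atTop := Ultrafilter.of_le _
    have hMW : M ∈ (W : Filter X) := by
      refine hWle (mem_map.mpr ?_)
      filter_upwards with i
      exact subset_closure (mem_range_self i)
    obtain ⟨xs, hxsM, hWxs⟩ := hMcpt.ultrafilter_le_nhds W (le_principal_iff.mpr hMW)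
    -- facts about the selected points
    have hzfacts : ∀ m, (∀ n, n ≤ m → |F n (z m) - F n (d' m)| < 1 / ((m : ℝ) + 1)) ∧
        |w (z m) - w (d' m)| < 1 / ((m : ℝ) + 1) := by
      intro m
      have h1 := (hzV m).1
      have h2 := (hzV m).2
      exact ⟨fun n hn => mem_iInter₂.mp h1 n (Finset.mem_range.mpr (Nat.lt_succ_of_le hn)), h2⟩
    -- coordinates converge: F k (z (ψ i)) → F k x
    have hcoordd' : ∀ k, Tendsto (fun m => F k (d' m)) atTop (𝓝 (F k x)) := by
      intro k
      exact tendsto_pi_nhds.mp hd'lim k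
    have h1 : ∀ k, Tendsto (fun i => F k (z (ψ i))) atTop (𝓝 (F k x)) := by
      intro k
      have hbase : Tendsto (fun i => F k (d' (ψ i))) atTop (𝓝 (F k x)) :=
        (hcoordd' k).comp hψ.tendsto_atTop
      refine tendsto_of_tendsto_of_dist hbase ?_
      refine squeeze_zero' (Eventually.of_forall fun i => dist_nonneg) ?_
        (hinv.comp hψ.tendsto_atTop)
      filter_upwards [eventually_ge_atTop k] with i hi
      have hk : k ≤ ψ i := le_trans hi hψ.le_apply
      have := (hzfacts (ψ i)).1 k hk
      rw [dist_comm, Real.dist_eq]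
      exact le_of_lt this
    -- the cluster point has the same trace as x
    have hΦeq : Φ xs = Φ x := by
      funext k
      have hA : Tendsto (F k) (W : Filter X) (𝓝 (F k xs)) :=
        ((F k).continuous.tendsto xs).mono_left hWxs
      have hB : Tendsto (F k) (W : Filter X) (𝓝 (F k x)) := by
        refine Tendsto.mono_left ?_ hWle
        rw [tendsto_map'_iff]
        exact h1 k
      exact tendsto_nhds_unique hA hB
    have hweq : w xs = w x := hw xs x hΦeq
    -- but w-values along the selected points stay ε/2 away from w x
    have hev : ∀ᶠ y in (W : Filter X), ε / 2 ≤ dist (w y) (w x) := by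
      have hsmall : ∀ᶠ i in atTop, 1 / ((ψ i : ℝ) + 1) ≤ ε / 2 := by
        have : ∀ᶠ i in atTop, 1 / ((ψ i : ℝ) + 1) < ε / 2 :=
          (hinv.comp hψ.tendsto_atTop).eventually (eventually_lt_nhds (by linarith : (0:ℝ) < ε / 2))
        filter_upwards [this] with i hi using le_of_lt hi
      have hevmap : ∀ᶠ i in atTop, ε / 2 ≤ dist (w ((z ∘ ψ) i)) (w x) := by
        filter_upwards [hsmall] with i hi
        have hzw := (hzfacts (ψ i)).2
        have hfar' := hd'far (ψ i)
        have htri : dist (w (d' (ψ i))) (w x) ≤ dist (w (d' (ψ i))) (w (z (ψ i)))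
            + dist (w (z (ψ i))) (w x) := dist_triangle _ _ _
        have hzd : dist (w (d' (ψ i))) (w (z (ψ i))) < 1 / ((ψ i : ℝ) + 1) := by
          rw [dist_comm, Real.dist_eq]
          exact hzw
        have hcomp : dist (w ((z ∘ ψ) i)) (w x) = dist (w (z (ψ i))) (w x) := rfl
        rw [hcomp]
        linarith
      have hevm : ∀ᶠ y in Filter.map (z ∘ ψ) atTop, ε / 2 ≤ dist (w y) (w x) :=
        eventually_map.mpr hevmap
      exact hevm.filter_mono hWle
    have hdlim : Tendsto (fun y => dist (w y) (w x)) (W : Filter X)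
        (𝓝 (dist (w xs) (w x))) :=
      ((w.continuous.dist continuous_const).tendsto xs).mono_left hWxs
    have hge : ε / 2 ≤ dist (w xs) (w x) := ge_of_tendsto hdlim hev
    rw [hweq, dist_self] at hge
    linarith
  -- ultrafilter limits inside K
  have limfun : ∀ U : Ultrafilter ℕ, (U : Filter ℕ) ≤ atTop →
      ∃ G, G ∈ K ∧ ∀ z : X, Tendsto (fun k => F k z) (U : Filter ℕ) (𝓝 (G z)) := by
    intro U hU
    have hmem : K ∈ (U.map F : Filter C(X, ℝ)) := by
      rw [Ultrafilter.coe_map, mem_map]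
      exact univ_mem' hFmem
    obtain ⟨G, hGK, hGle⟩ := hK.ultrafilter_le_nhds (U.map F) (le_principal_iff.mpr hmem)
    refine ⟨G, hGK, fun z => ?_⟩
    have htF : Tendsto F (U : Filter ℕ) (𝓝 G) := by
      rw [Ultrafilter.coe_map] at hGle
      exact hGle
    exact ((continuous_eval_const z).tendsto G).comp htF
  -- properties of such limits
  have hfib : ∀ (U : Ultrafilter ℕ) (G : C(X, ℝ)),
      (∀ z : X, Tendsto (fun k => F k z) (U : Filter ℕ) (𝓝 (G z))) →
      ∀ z z' : X, Φ z = Φ z' → G z = G z' := by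
    intro U G hG z z' hzz
    have h1 := hG z
    have h2 := hG z'
    have heqfun : (fun k => F k z) = (fun k => F k z') := by
      funext k
      exact congrFun hzz k
    rw [heqfun] at h1
    exact tendsto_nhds_unique h1 h2
  have hdval : ∀ (U : Ultrafilter ℕ) (G : C(X, ℝ)),
      (U : Filter ℕ) ≤ atTop →
      (∀ z : X, Tendsto (fun k => F k z) (U : Filter ℕ) (𝓝 (G z))) →
      ∀ i, G (d i) = ℓ i := by
    intro U G hU hG i
    exact tendsto_nhds_unique (hG (d i)) ((hconv i).mono_left hU)
  have agree : ∀ (U U' : Ultrafilter ℕ) (G G' : C(X, ℝ)),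
      (U : Filter ℕ) ≤ atTop → (U' : Filter ℕ) ≤ atTop →
      (∀ z : X, Tendsto (fun k => F k z) (U : Filter ℕ) (𝓝 (G z))) →
      (∀ z : X, Tendsto (fun k => F k z) (U' : Filter ℕ) (𝓝 (G' z))) →
      ∀ x : X, G x = G' x := by
    intro U U' G G' hU hU' hG hG' x
    obtain ⟨s, hs⟩ := hdense x
    have hA := lemF G (hfib U G hG) x s hs
    have hB := lemF G' (hfib U' G' hG') x s hs
    have heqfun : (fun j => G (d (s j))) = (fun j => G' (d (s j))) := by
      funext j
      rw [hdval U G hU hG (s j), hdval U' G' hU' hG' (s j)]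
    rw [heqfun] at hA
    exact tendsto_nhds_unique hA hB
  -- the canonical limit g
  obtain ⟨g, hgK, hg⟩ := limfun (Ultrafilter.of atTop) (Ultrafilter.of_le _)
  -- pointwise convergence of the whole sequence F to g
  have hpt : ∀ x : X, Tendsto (fun k => F k x) atTop (𝓝 (g x)) := by
    intro x
    by_contra hcon
    rw [Metric.tendsto_atTop] at hcon
    push_neg at hcon
    obtain ⟨ε, hε, hfar⟩ := hcon
    obtain ⟨jm, hjm, hjfar⟩ :=
      Filter.extraction_of_frequently_atTop (Filter.frequently_atTop.mpr hfar)
    have hBdd : Bornology.IsBounded ((fun f : C(X, ℝ) => f x) '' K) :=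
      (hK.image (continuous_eval_const x)).isBounded
    obtain ⟨c, hc, ρ, hρ, hρlim⟩ := tendsto_subseq_of_bounded hBdd
      (x := fun m => F (jm m) x) (fun m => mem_image_of_mem _ (hFmem _))
    have hcfar : ε ≤ dist c (g x) := by
      have hdl : Tendsto (fun m => dist (F (jm (ρ m)) x) (g x)) atTop
          (𝓝 (dist c (g x))) := hρlim.dist tendsto_const_nhds
      refine ge_of_tendsto hdl ?_
      filter_upwards with m
      exact hjfar (ρ m)
    set U₁ : Ultrafilter ℕ := Ultrafilter.of (Filter.map (jm ∘ ρ) atTop) with hU₁def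
    have hU₁m : (U₁ : Filter ℕ) ≤ Filter.map (jm ∘ ρ) atTop := Ultrafilter.of_le _
    have hU₁ : (U₁ : Filter ℕ) ≤ atTop := hU₁m.trans (hjm.comp hρ).tendsto_atTop
    obtain ⟨G₁, hG₁K, hG₁⟩ := limfun U₁ hU₁
    have hG₁x : G₁ x = c := by
      have hT : Tendsto (fun k => F k x) (Filter.map (jm ∘ ρ) atTop) (𝓝 c) := by
        rw [tendsto_map'_iff]
        exact hρlim
      exact tendsto_nhds_unique (hG₁ x) (hT.mono_left hU₁m)
    have hGg : G₁ x = g x := agree U₁ (Ultrafilter.of atTop) G₁ g hU₁ (Ultrafilter.of_le _) hG₁ hg x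
    rw [hGg] at hG₁x
    rw [← hG₁x] at hcfar
    rw [dist_self] at hcfar
    linarith
  -- upgrade to uniform convergence via selective ω-boundedness
  have hunif : TendstoUniformly (fun k x => F k x) (⇑g) atTop := by
    by_contra hcon
    rw [Metric.tendstoUniformly_iff] at hcon
    push_neg at hcon
    obtain ⟨ε, hε, hfar⟩ := hcon
    obtain ⟨kj, hkj, hkjfar⟩ := Filter.extraction_of_frequently_atTop hfar
    set V : ℕ → Set X := fun j => {x | ε / 2 < dist (g x) (F (kj j) x)} with hVdef
    have hVopen : ∀ j, IsOpen (V j) := by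
      intro j
      have hc : Continuous fun x => dist (g x) (F (kj j) x) :=
        g.continuous.dist (F (kj j)).continuous
      exact isOpen_lt continuous_const hc
    have hVne : ∀ j, (V j).Nonempty := by
      intro j
      obtain ⟨x, hx⟩ := hkjfar j
      exact ⟨x, by simpa [hVdef] using lt_of_lt_of_le (by linarith) hx⟩
    obtain ⟨z, hzV, ψ, hψ, hMcpt⟩ := hsob V hVopen hVne
    set M := closure (Set.range (z ∘ ψ)) with hMdef
    haveI : CompactSpace ↥M := isCompact_iff_compactSpace.mp hMcpt
    have hrc : Continuous (fun f : C(X, ℝ) => f.restrict M) :=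
      ContinuousMap.continuous_restrict M
    have himg : IsCompact ((fun f : C(X, ℝ) => f.restrict M) '' K) := hK.image hrc
    obtain ⟨w, hwmem, τ, hτ, hτlim⟩ := himg.isSeqCompact
      (x := fun i => (F (kj (ψ i))).restrict M)
      (fun i => mem_image_of_mem _ (hFmem _))
    -- identify w with g.restrict M pointwise
    have hwg : w = g.restrict M := by
      ext zM
      have hA : Tendsto (fun i => ((F (kj (ψ (τ i)))).restrict M) zM) atTop (𝓝 (w zM)) :=
        ((continuous_eval_const zM).tendsto w).comp hτlim
      have hB : Tendsto (fun i => F (kj (ψ (τ i))) (zM : X)) atTop (𝓝 (g (zM : X))) :=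
        (hpt (zM : X)).comp ((hkj.comp (hψ.comp hτ)).tendsto_atTop)
      exact tendsto_nhds_unique hA hB
    rw [hwg] at hτlim
    rw [Metric.tendsto_atTop] at hτlim
    obtain ⟨N, hN⟩ := hτlim (ε / 2) (by linarith)
    have hdistN := hN N le_rfl
    -- but the witness point gives a lower bound on the sup distance
    have hmemM : z (ψ (τ N)) ∈ M := subset_closure (mem_range_self (τ N))
    set pt : ↥M := ⟨z (ψ (τ N)), hmemM⟩ with hptdef
    have hlow : ε / 2 < dist (g (pt : X)) (F (kj (ψ (τ N))) (pt : X)) := hzV (ψ (τ N))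
    have hle : dist (((F (kj (ψ (τ N)))).restrict M) pt) ((g.restrict M) pt)
        ≤ dist ((F (kj (ψ (τ N)))).restrict M) (g.restrict M) :=
      ContinuousMap.dist_apply_le_dist pt
    have : dist (g (pt : X)) (F (kj (ψ (τ N))) (pt : X)) ≤
        dist ((F (kj (ψ (τ N)))).restrict M) (g.restrict M) := by
      rw [dist_comm (g (pt : X))]
      exact hle
    have hcontr : dist (g (pt : X)) (F (kj (ψ (τ N))) (pt : X)) < ε / 2 :=
      lt_of_le_of_lt this hdistN
    linarith
  exact ⟨σ, hσ, g, hgK, hunif⟩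

theorem stmt16 (X : Type*) [TopologicalSpace X] [T35Space X]
    (hpc : Pseudocompact X) (hsob : SelectivelyOmegaBounded X)
    (K : Set C(X, ℝ)) (hK : IsCompact K) :
    TopologicalSpace.MetrizableSpace K := by
  classical
  -- embed continuous functions into bounded continuous functions (pseudocompactness)
  have hbd : ∀ f : C(X, ℝ), ∃ C, ∀ x y, dist (f x) (f y) ≤ C := by
    intro f
    obtain ⟨M, hM⟩ := hpc f
    refine ⟨2 * M, fun x y => ?_⟩
    rw [Real.dist_eq]
    have h1 := hM x
    have h2 := hM y
    calc |f x - f y| ≤ |f x| + |f y| := abs_sub _ _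
    _ ≤ 2 * M := by linarith
  set e : C(X, ℝ) → BoundedContinuousFunction X ℝ := fun f => ⟨f, hbd f⟩ with hedef
  have hecoe : ∀ f : C(X, ℝ), ⇑(e f) = ⇑f := fun f => rfl
  have hetoC : ∀ f : C(X, ℝ), (e f).toContinuousMap = f := fun f => rfl
  -- the image of K is sequentially compact, hence compact
  have hS : IsSeqCompact (e '' K) := by
    intro y hy
    choose F hFK hFe using fun k => hy k
    obtain ⟨σ, hσ, g, hgK, hunif⟩ := hsob.exists_unif_subseq K hK F hFK
    refine ⟨e g, mem_image_of_mem _ hgK, σ, hσ, ?_⟩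
    have hyeq : y ∘ σ = fun k => e (F (σ k)) := by
      funext k
      exact (hFe (σ k)).symm
    rw [hyeq]
    exact BoundedContinuousFunction.tendsto_iff_tendstoUniformly.mpr hunif
  have hScpt : IsCompact (e '' K) := hS.isCompact
  haveI : CompactSpace ↥(e '' K) := isCompact_iff_compactSpace.mp hScpt
  -- the inverse map to K is continuous
  have hback : Continuous (fun b : BoundedContinuousFunction X ℝ => b.toContinuousMap) := by
    refine SeqContinuous.continuous ?_
    intro bs b hbs
    have h1 : TendstoUniformly (fun n => ⇑(bs n)) (⇑b) atTop :=
      BoundedContinuousFunction.tendsto_iff_tendstoUniformly.mp hbs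
    rw [ContinuousMap.tendsto_iff_forall_isCompact_tendstoUniformlyOn]
    intro L hL
    exact h1.tendstoUniformlyOn
  set p : ↥(e '' K) → ↥K := fun b => ⟨(b : BoundedContinuousFunction X ℝ).toContinuousMap, by
    obtain ⟨f, hf, hfe⟩ := b.2
    rw [← hfe]
    exact hf⟩ with hpdef
  have hpinj : Function.Injective p := by
    intro a b h
    have h1 : (a : BoundedContinuousFunction X ℝ).toContinuousMap = (b : BoundedContinuousFunction X ℝ).toContinuousMap :=
      congrArg Subtype.val h
    refine Subtype.ext (BoundedContinuousFunction.ext fun x => ?_)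
    exact ContinuousMap.congr_fun h1 x
  have hpsurj : Function.Surjective p := by
    rintro ⟨f, hf⟩
    exact ⟨⟨e f, mem_image_of_mem _ hf⟩, Subtype.ext rfl⟩
  have hpc2 : Continuous p :=
    Continuous.subtype_mk (hback.comp continuous_subtype_val) _
  have hqc : Continuous (Equiv.ofBijective p ⟨hpinj, hpsurj⟩ : ↥(e '' K) ≃ ↥K) := hpc2
  have homeo : ↥(e '' K) ≃ₜ ↥K := hqc.homeoOfEquivCompactToT2
  exact homeo.symm.isEmbedding.metrizableSpace
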